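/- A finite quantum score S on Dens(n) is truthful if and only if there exist a convex function F : Dens(n) → ℝ and, for each ρ' ∈ Dens(n), a Hermitian matrix d_{ρ'} that is a subgradient of F at ρ', such that S(ρ'; ρ) = F(ρ') + ⟨d_{ρ'}, ρ − ρ'⟩ for all ρ, ρ' ∈ Dens(n). Moreover, S is strictly truthful if and only if such an F can be chosen strictly convex on Dens(n). -/

import Mathlib

open Matrix BigOperators ComplexOrder

noncomputable section

/-- The space of `n × n` complex matrices. -/
abbrev Mat (n : ℕ) := Matrix (Fin n) (Fin n) ℂ

/-- The set of density matrices on ℂⁿ: positive semidefinite with trace 1. -/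
def Dens (n : ℕ) : Set (Mat n) := {ρ | ρ.PosSemidef ∧ ρ.trace = 1}

/-- Real inner product on (Hermitian) matrices: ⟨A,B⟩ = Tr(AB) (real part). -/
def hip {n : ℕ} (A B : Mat n) : ℝ := ((A * B).trace).re

/-- A POVM with finite outcome set `Y`. -/
def IsPOVM {n : ℕ} {Y : Type*} [Fintype Y] (μ : Y → Mat n) : Prop :=
  (∀ y, (μ y).PosSemidef) ∧ ∑ y, μ y = 1

/-- A projection-valued measurement. -/
def IsPVM {n : ℕ} {Y : Type*} [Fintype Y] (μ : Y → Mat n) : Prop :=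
  IsPOVM μ ∧ (∀ y, (μ y).IsHermitian ∧ μ y * μ y = μ y) ∧
    ∀ y y', y ≠ y' → μ y * μ y' = 0

/-- Expected score of a quantum score with report type `R`. -/
def expScoreR {n : ℕ} {R : Type*} {Y : Type*} [Fintype Y]
    (s : R → Y → ℝ) (μ : R → Y → Mat n) (r : R) (ρ : Mat n) : ℝ :=
  ∑ y, hip (μ r y) ρ * s r y

/-- Truthfulness of a quantum score. -/
def Truthful {n : ℕ} {Y : Type*} [Fintype Y]
    (s : Mat n → Y → ℝ) (μ : Mat n → Y → Mat n) : Prop :=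
  ∀ ρ ∈ Dens n, ∀ ρ' ∈ Dens n, expScoreR s μ ρ' ρ ≤ expScoreR s μ ρ ρ

/-- Strict truthfulness of a quantum score. -/
def StrictlyTruthful {n : ℕ} {Y : Type*} [Fintype Y]
    (s : Mat n → Y → ℝ) (μ : Mat n → Y → Mat n) : Prop :=
  Truthful s μ ∧ ∀ ρ ∈ Dens n, ∀ ρ' ∈ Dens n,
    expScoreR s μ ρ' ρ = expScoreR s μ ρ ρ → ρ' = ρ

/-- `d` is a (Hermitian-matrix) subgradient of `F` at `ρ` relative to `Dens n`. -/
def IsQSubgrad {n : ℕ} (F : Mat n → ℝ) (ρ d : Mat n) : Prop :=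
  ∀ τ ∈ Dens n, F ρ + hip d (τ - ρ) ≤ F τ

/-- `d` is a subgradient of `f` at `p` relative to `P ⊆ ℝ^Y`. -/
def IsCSubgrad {Y : Type*} [Fintype Y] (P : Set (Y → ℝ)) (f : (Y → ℝ) → ℝ)
    (p d : Y → ℝ) : Prop :=
  ∀ q ∈ P, f p + ∑ y, d y * (q y - p y) ≤ f q

/-- A POVM is tomographically complete if the real span of its elements is
the set of Hermitian matrices. -/
def TomoComplete {n : ℕ} {Y : Type*} [Fintype Y] (μ : Y → Mat n) : Prop :=
  ∀ X : Mat n, X.IsHermitian ↔ X ∈ Submodule.span ℝ (Set.range μ)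

/-- The eigenvalues of a Hermitian matrix, in non-increasing order
(junk value `0` on non-Hermitian matrices). -/
def eigs {n : ℕ} (ρ : Mat n) : Fin n → ℝ :=
  if h : ρ.IsHermitian then
    fun i => (h.eigenvalues ∘ (Tuple.sort h.eigenvalues)) i.rev
  else 0

/-- The outer product `v v*`. -/
def outer {n : ℕ} (v : Fin n → ℂ) : Mat n := Matrix.vecMulVec v (star v)

/-- A family of orthonormal vectors in ℂⁿ. -/
def ONFam {n k : ℕ} (x : Fin k → Fin n → ℂ) : Prop :=
  ∀ i j, ∑ m, (starRingEnd ℂ) (x i m) * x j m = if i = j then 1 else 0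

/-- `x` is a spectral decomposition of `ρ` (with eigenvalues in non-increasing
order `eigs ρ`). -/
def IsSpecDecomp {n : ℕ} (ρ : Mat n) (x : Fin n → Fin n → ℂ) : Prop :=
  ONFam x ∧ ρ = ∑ y, (eigs ρ y : ℂ) • outer (x y)

/-- Expected classical score `ŝ(q; p)`. -/
def cExp {n : ℕ} (s : (Fin n → ℝ) → Fin n → ℝ) (q p : Fin n → ℝ) : ℝ :=
  ∑ y, p y * s q y

/-- Properness of a classical scoring rule. -/
def Proper {n : ℕ} (s : (Fin n → ℝ) → Fin n → ℝ) : Prop :=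
  ∀ p ∈ stdSimplex ℝ (Fin n), ∀ q ∈ stdSimplex ℝ (Fin n), cExp s q p ≤ cExp s p p

/-- Strict properness of a classical scoring rule. -/
def StrictlyProper {n : ℕ} (s : (Fin n → ℝ) → Fin n → ℝ) : Prop :=
  Proper s ∧ ∀ p ∈ stdSimplex ℝ (Fin n), ∀ q ∈ stdSimplex ℝ (Fin n),
    cExp s q p = cExp s p p → q = p

/-- Permutation invariance of a classical scoring rule: `ŝ(p, y) = ŝ(πp, π y)`
where `(πp)_y = p_{π y}`. -/
def PermInv {n : ℕ} (s : (Fin n → ℝ) → Fin n → ℝ) : Prop :=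
  ∀ (π : Equiv.Perm (Fin n)) (p : Fin n → ℝ) (y : Fin n), s p y = s (p ∘ π) (π y)

/-- Expected spectral score `S[ŝ](ρ'; ρ)` computed using the spectral
decomposition `x` of the report `ρ'`. -/
def specExp {n : ℕ} (s : (Fin n → ℝ) → Fin n → ℝ) (x : Fin n → Fin n → ℂ)
    (ρ' ρ : Mat n) : ℝ :=
  ∑ y, hip (outer (x y)) ρ * s (eigs ρ') y

/-- Truthfulness of the spectral score `S[ŝ]`. -/
def SpecTruthful {n : ℕ} (s : (Fin n → ℝ) → Fin n → ℝ) : Prop :=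
  ∀ ρ ∈ Dens n, ∀ ρ' ∈ Dens n, ∀ x z, IsSpecDecomp ρ' x → IsSpecDecomp ρ z →
    specExp s x ρ' ρ ≤ specExp s z ρ ρ

/-- Strict truthfulness of the spectral score `S[ŝ]`. -/
def SpecStrictlyTruthful {n : ℕ} (s : (Fin n → ℝ) → Fin n → ℝ) : Prop :=
  SpecTruthful s ∧ ∀ ρ ∈ Dens n, ∀ ρ' ∈ Dens n, ∀ x z,
    IsSpecDecomp ρ' x → IsSpecDecomp ρ z →
    specExp s x ρ' ρ = specExp s z ρ ρ → ρ' = ρ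

/-- Elicitability of a property of density matrices by a quantum score. -/
def ElicitableProp {n : ℕ} {R : Type*} (Γ : Mat n → R) : Prop :=
  ∃ (m : ℕ) (s : R → Fin m → ℝ) (μ : R → Fin m → Mat n),
    (∀ r, IsPOVM (μ r)) ∧
    ∀ ρ ∈ Dens n, ∀ r, (∀ r', expScoreR s μ r' ρ ≤ expScoreR s μ r ρ) ↔ r = Γ ρ

/-- Identifiability of an ℝᵏ-valued property of density matrices. -/
def IdentifiableProp {n k : ℕ} (Γ : Mat n → (Fin k → ℝ)) : Prop :=
  ∃ V : (Fin k → ℝ) → Fin k → Mat n,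
    ∀ r ∈ Γ '' (Dens n), (∀ i, (V r i).IsHermitian) ∧
      ∀ ρ ∈ Dens n, (Γ ρ = r ↔ ∀ i, hip (V r i) ρ = 0)

/-- `Γ` is `k`-elicitable. -/
def KElicitable {n : ℕ} {R : Type*} (k : ℕ) (Γ : Mat n → R) : Prop :=
  ∃ (Γh : Mat n → (Fin k → ℝ)) (ψ : (Fin k → ℝ) → R),
    ElicitableProp Γh ∧ IdentifiableProp Γh ∧ ∀ ρ ∈ Dens n, Γ ρ = ψ (Γh ρ)

end

section Aux

open Finset

lemma hip_sub_right {n : ℕ} (A B C : Mat n) : hip A (B - C) = hip A B - hip A C := by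
  simp [hip, mul_sub, Complex.sub_re]

lemma hip_zero_right {n : ℕ} (A : Mat n) : hip A 0 = 0 := by
  simp [hip]

lemma hip_smul_right {n : ℕ} (c : ℝ) (A B : Mat n) : hip A (c • B) = c * hip A B := by
  simp [hip, mul_smul_comm, Matrix.trace_smul, Complex.real_smul]

lemma hip_add_right {n : ℕ} (A B C : Mat n) : hip A (B + C) = hip A B + hip A C := by
  simp [hip, mul_add, Complex.add_re]

lemma hip_smul_left {n : ℕ} (c : ℝ) (A B : Mat n) : hip (c • A) B = c * hip A B := by
  simp [hip, smul_mul_assoc, Matrix.trace_smul, Complex.real_smul]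

lemma hip_sum_left {n : ℕ} {Y : Type*} [Fintype Y] (f : Y → Mat n) (B : Mat n) :
    hip (∑ y, f y) B = ∑ y, hip (f y) B := by
  simp [hip, Finset.sum_mul, Matrix.trace_sum, Complex.re_sum]

lemma expScoreR_eq_hip {n : ℕ} {Y : Type*} [Fintype Y]
    (s : Mat n → Y → ℝ) (μ : Mat n → Y → Mat n) (r ρ : Mat n) :
    expScoreR s μ r ρ = hip (∑ y, s r y • μ r y) ρ := by
  rw [expScoreR, hip_sum_left]
  refine Finset.sum_congr rfl fun y _ => ?_
  rw [hip_smul_left]; ring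

lemma expScoreR_combo {n : ℕ} {Y : Type*} [Fintype Y]
    (s : Mat n → Y → ℝ) (μ : Mat n → Y → Mat n) (r ρ τ : Mat n) (a b : ℝ) :
    expScoreR s μ r (a • ρ + b • τ) = a * expScoreR s μ r ρ + b * expScoreR s μ r τ := by
  simp only [expScoreR_eq_hip, hip_add_right, hip_smul_right]

lemma dens_convex {n : ℕ} : Convex ℝ (Dens n) := by
  rintro ρ ⟨hρp, hρt⟩ τ ⟨hτp, hτt⟩ a b ha hb hab
  refine ⟨?_, ?_⟩
  · refine Matrix.PosSemidef.of_dotProduct_mulVec_nonneg ?_ ?_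
    · have := hρp.1; have := hτp.1
      unfold Matrix.IsHermitian at *
      rw [Matrix.conjTranspose_add, Matrix.conjTranspose_smul, Matrix.conjTranspose_smul,
        hρp.1, hτp.1]
      simp
    · intro x
      have h1 := hρp.dotProduct_mulVec_nonneg x
      have h2 := hτp.dotProduct_mulVec_nonneg x
      have : star x ⬝ᵥ ((a • ρ + b • τ) *ᵥ x)
          = (a : ℂ) * (star x ⬝ᵥ (ρ *ᵥ x)) + (b : ℂ) * (star x ⬝ᵥ (τ *ᵥ x)) := by
        simp [Matrix.add_mulVec, Matrix.smul_mulVec, dotProduct_add,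
          dotProduct_smul, Complex.real_smul]
      rw [this]
      have ha' : (0:ℂ) ≤ (a:ℂ) := by
        rw [Complex.zero_le_real]; exact ha
      have hb' : (0:ℂ) ≤ (b:ℂ) := by
        rw [Complex.zero_le_real]; exact hb
      exact add_nonneg (mul_nonneg ha' h1) (mul_nonneg hb' h2)
  · rw [Matrix.trace_add, Matrix.trace_smul, Matrix.trace_smul, hρt, hτt]
    simp [Complex.real_smul]
    exact_mod_cast hab

lemma isHermitian_real_smul {n : ℕ} (c : ℝ) {A : Mat n} (hA : A.IsHermitian) :
    (c • A).IsHermitian := by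
  unfold Matrix.IsHermitian at *
  rw [Matrix.conjTranspose_smul, star_trivial, hA]

lemma hermitian_d {n : ℕ} {Y : Type*} [Fintype Y]
    (s : Mat n → Y → ℝ) (μ : Mat n → Y → Mat n) (r : Mat n)
    (h : IsPOVM (μ r)) : (∑ y, s r y • μ r y).IsHermitian := by
  unfold Matrix.IsHermitian
  rw [Matrix.conjTranspose_sum]
  exact Finset.sum_congr rfl fun y _ => isHermitian_real_smul (s r y) (h.1 y).1

end Aux

/-- characterization of (strictly) truthful finite quantum scores. -/
theorem truthful_iff_convex_representation {n : ℕ} {Y : Type*} [Fintype Y]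
    (s : Mat n → Y → ℝ) (μ : Mat n → Y → Mat n)
    (hμ : ∀ ρ' ∈ Dens n, IsPOVM (μ ρ')) :
    (Truthful s μ ↔
      ∃ (F : Mat n → ℝ) (d : Mat n → Mat n),
        ConvexOn ℝ (Dens n) F ∧
        (∀ ρ' ∈ Dens n, (d ρ').IsHermitian ∧ IsQSubgrad F ρ' (d ρ')) ∧
        (∀ ρ' ∈ Dens n, ∀ ρ ∈ Dens n,
          expScoreR s μ ρ' ρ = F ρ' + hip (d ρ') (ρ - ρ'))) ∧
    (StrictlyTruthful s μ ↔
      ∃ (F : Mat n → ℝ) (d : Mat n → Mat n),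
        StrictConvexOn ℝ (Dens n) F ∧
        (∀ ρ' ∈ Dens n, (d ρ').IsHermitian ∧ IsQSubgrad F ρ' (d ρ')) ∧
        (∀ ρ' ∈ Dens n, ∀ ρ ∈ Dens n,
          expScoreR s μ ρ' ρ = F ρ' + hip (d ρ') (ρ - ρ'))) := by
  classical
  -- shared ingredients
  set F : Mat n → ℝ := fun ρ => expScoreR s μ ρ ρ with hF
  set d : Mat n → Mat n := fun r => ∑ y, s r y • μ r y with hd
  have hrep : ∀ ρ' ρ : Mat n, expScoreR s μ ρ' ρ = F ρ' + hip (d ρ') (ρ - ρ') := by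
    intro ρ' ρ
    simp only [hF, hd, expScoreR_eq_hip s μ, hip_sub_right]
    ring
  -- truthful → representation
  have fwd : Truthful s μ →
      ∃ (F : Mat n → ℝ) (d : Mat n → Mat n),
        ConvexOn ℝ (Dens n) F ∧
        (∀ ρ' ∈ Dens n, (d ρ').IsHermitian ∧ IsQSubgrad F ρ' (d ρ')) ∧
        (∀ ρ' ∈ Dens n, ∀ ρ ∈ Dens n,
          expScoreR s μ ρ' ρ = F ρ' + hip (d ρ') (ρ - ρ')) := by
    intro hT
    refine ⟨F, d, ?_, ?_, fun ρ' _ ρ _ => hrep ρ' ρ⟩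
    · refine ⟨dens_convex, ?_⟩
      intro ρ hρ τ hτ a b ha hb hab
      have hσ : a • ρ + b • τ ∈ Dens n := dens_convex hρ hτ ha hb hab
      have h1 : expScoreR s μ (a • ρ + b • τ) ρ ≤ F ρ := hT ρ hρ _ hσ
      have h2 : expScoreR s μ (a • ρ + b • τ) τ ≤ F τ := hT τ hτ _ hσ
      calc F (a • ρ + b • τ)
          = a * expScoreR s μ (a • ρ + b • τ) ρ + b * expScoreR s μ (a • ρ + b • τ) τ :=
            expScoreR_combo s μ _ ρ τ a b
        _ ≤ a * F ρ + b * F τ :=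
            add_le_add (mul_le_mul_of_nonneg_left h1 ha) (mul_le_mul_of_nonneg_left h2 hb)
        _ = a • F ρ + b • F τ := by simp [smul_eq_mul]
    · intro ρ' hρ'
      refine ⟨hermitian_d s μ ρ' (hμ ρ' hρ'), ?_⟩
      intro τ hτ
      have := hT τ hτ ρ' hρ'
      rw [hrep ρ' τ] at this
      exact this
  -- representation → truthful
  have bwd : ∀ (F : Mat n → ℝ) (d : Mat n → Mat n),
      (∀ ρ' ∈ Dens n, (d ρ').IsHermitian ∧ IsQSubgrad F ρ' (d ρ')) →
      (∀ ρ' ∈ Dens n, ∀ ρ ∈ Dens n,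
        expScoreR s μ ρ' ρ = F ρ' + hip (d ρ') (ρ - ρ')) →
      Truthful s μ := by
    intro F d hsub hr ρ hρ ρ' hρ'
    have e1 : expScoreR s μ ρ ρ = F ρ := by
      rw [hr ρ hρ ρ hρ]; simp [hip_zero_right]
    rw [hr ρ' hρ' ρ hρ, e1]
    exact (hsub ρ' hρ').2 ρ hρ
  constructor
  · exact ⟨fwd, fun ⟨F, d, hc, hsub, hr⟩ => bwd F d hsub hr⟩
  constructor
  · rintro ⟨hT, hS⟩
    obtain ⟨F', d', hc, hsub, hr⟩ := fwd hT
    refine ⟨F', d', ⟨dens_convex, ?_⟩, hsub, hr⟩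
    intro ρ hρ τ hτ hne a b ha hb hab
    have hσ : a • ρ + b • τ ∈ Dens n := dens_convex hρ hτ ha.le hb.le hab
    have hσρ : (a • ρ + b • τ : Mat n) ≠ ρ := by
      intro h
      apply hne
      have key : b • τ - b • ρ = (a • ρ + b • τ) - ρ := by
        have h1 : b = 1 - a := by linarith
        rw [h1]; module
      rw [h, sub_self] at key
      exact (smul_right_injective _ (ne_of_gt hb) (sub_eq_zero.mp key)).symm
    have hστ : (a • ρ + b • τ : Mat n) ≠ τ := by
      intro h
      apply hne
      have key : a • ρ - a • τ = (a • ρ + b • τ) - τ := by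
        have h1 : a = 1 - b := by linarith
        rw [h1]; module
      rw [h, sub_self] at key
      exact smul_right_injective _ (ne_of_gt ha) (sub_eq_zero.mp key)
    have h1 : expScoreR s μ (a • ρ + b • τ) ρ < expScoreR s μ ρ ρ := by
      rcases lt_or_eq_of_le (hT ρ hρ _ hσ) with h | h
      · exact h
      · exact absurd (hS ρ hρ _ hσ h) hσρ
    have h2 : expScoreR s μ (a • ρ + b • τ) τ < expScoreR s μ τ τ := by
      rcases lt_or_eq_of_le (hT τ hτ _ hσ) with h | h
      · exact h
      · exact absurd (hS τ hτ _ hσ h) hστ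
    have hFdef : ∀ x ∈ Dens n, F' x = expScoreR s μ x x := by
      intro x hx
      have := hr x hx x hx
      simp [hip_zero_right] at this
      linarith
    calc F' (a • ρ + b • τ)
        = a * expScoreR s μ (a • ρ + b • τ) ρ + b * expScoreR s μ (a • ρ + b • τ) τ := by
          rw [hFdef _ hσ]; exact expScoreR_combo s μ _ ρ τ a b
      _ < a * expScoreR s μ ρ ρ + b * expScoreR s μ τ τ := by
          gcongr
      _ = a • F' ρ + b • F' τ := by rw [hFdef ρ hρ, hFdef τ hτ]; simp [smul_eq_mul]
  · rintro ⟨F', d', hsc, hsub, hr⟩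
    have hT : Truthful s μ := bwd F' d' hsub hr
    refine ⟨hT, ?_⟩
    intro ρ hρ ρ' hρ' heq
    by_contra hne
    have eFρ : expScoreR s μ ρ ρ = F' ρ := by
      rw [hr ρ hρ ρ hρ]; simp [hip_zero_right]
    have key : F' ρ' + hip (d' ρ') (ρ - ρ') = F' ρ := by
      rw [← hr ρ' hρ' ρ hρ, heq, eFρ]
    set σ : Mat n := (1/2 : ℝ) • ρ' + (1/2 : ℝ) • ρ with hσdef
    have hσ : σ ∈ Dens n := dens_convex hρ' hρ (by norm_num) (by norm_num) (by norm_num)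
    have hsg := (hsub ρ' hρ').2 σ hσ
    have hσsub : σ - ρ' = (1/2 : ℝ) • (ρ - ρ') := by
      rw [hσdef, smul_sub]
      module
    rw [hσsub, hip_smul_right] at hsg
    have hstrict : F' σ < (1/2 : ℝ) • F' ρ' + (1/2 : ℝ) • F' ρ :=
      hsc.2 hρ' hρ hne (by norm_num) (by norm_num) (by norm_num)
    simp only [smul_eq_mul] at hstrict
    linarith
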